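/- Let U' ⊆ I be an open interval on which f_n never vanishes. Then twice continuously differentiable ξ, η : ℝ × I → ℝ satisfy the symmetry condition (SC) at every (t,u,v) ∈ ℝ × U' × ℝ if and only if ξ_u = 0 on ℝ × U' and there is a twice continuously differentiable function ξ̃ : ℝ → ℝ with ξ(t,u) = ξ̃(t) for all (t,u) ∈ ℝ × U' such that (ξ̃, η) satisfies the reduced system (S) on ℝ × U'. -/

import Mathlib

/-- Partial derivative in the first (time) variable. -/
noncomputable def pt (φ : ℝ → ℝ → ℝ) (t u : ℝ) : ℝ := deriv (fun s => φ s u) t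

/-- Partial derivative in the second (space) variable. -/
noncomputable def pu (φ : ℝ → ℝ → ℝ) (t u : ℝ) : ℝ := deriv (fun x => φ t x) u

/-- The expression `E(t,u,v)` from the symmetry condition. -/
noncomputable def symE (n : ℕ) (f : ℕ → ℝ → ℝ) (ξ η : ℝ → ℝ → ℝ) (t u v : ℝ) : ℝ :=
  (-(pt (pt η) t u) + deriv (f 0) u * η t u + f 1 u * pt η t u - f 0 u * pu η t u
      + 2 * f 0 u * pt ξ t u)
  + (pt (pt ξ) t u - 2 * pu (pt η) t u + deriv (f 1) u * η t u + 2 * f 2 u * pt η t u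
      + f 1 u * pt ξ t u + 3 * f 0 u * pu ξ t u) * v
  + (2 * pu (pt ξ) t u - pu (pu η) t u + deriv (f 2) u * η t u + 3 * f 3 u * pt η t u
      + f 2 u * pu η t u + 2 * f 1 u * pu ξ t u) * v ^ 2
  + (pu (pu ξ) t u + deriv (f 3) u * η t u + 4 * f 4 u * pt η t u + 2 * f 3 u * pu η t u
      - f 3 u * pt ξ t u + f 2 u * pu ξ t u) * v ^ 3
  + (∑ k ∈ Finset.Icc 4 (n - 1),
      (deriv (f k) u * η t u + ((k : ℝ) + 1) * f (k + 1) u * pt η t u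
        + ((k : ℝ) - 1) * f k u * pu η t u + (2 - (k : ℝ)) * f k u * pt ξ t u
        + (4 - (k : ℝ)) * f (k - 1) u * pu ξ t u) * v ^ k)
  + (deriv (f n) u * η t u + ((n : ℝ) - 1) * f n u * pu η t u
      + (2 - (n : ℝ)) * f n u * pt ξ t u + (4 - (n : ℝ)) * f (n - 1) u * pu ξ t u) * v ^ n
  + (3 - (n : ℝ)) * f n u * pu ξ t u * v ^ (n + 1)

/-- The symmetry condition (SC) on `ℝ × U × ℝ`. -/
def SC (n : ℕ) (f : ℕ → ℝ → ℝ) (ξ η : ℝ → ℝ → ℝ) (U : Set ℝ) : Prop :=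
  ∀ t : ℝ, ∀ u ∈ U, ∀ v : ℝ, symE n f ξ η t u v = 0

/-- The function `g = ((n−2)F)/((n−1)F')`. -/
noncomputable def gFun (n : ℕ) (F : ℝ → ℝ) (u : ℝ) : ℝ :=
  (((n : ℝ) - 2) * F u) / (((n : ℝ) - 1) * deriv F u)

/-- The system (E0)-(Ek) of equations on `U`. -/
def Esys (n : ℕ) (f : ℕ → ℝ → ℝ) (a : ℝ) (U : Set ℝ) (g : ℝ → ℝ) : Prop :=
  (∀ u ∈ U, -a ^ 2 * g u + deriv (f 0) u * g u + a * f 1 u * g u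
      - f 0 u * deriv g u + 2 * f 0 u = 0) ∧
  (∀ u ∈ U, a * (1 - 2 * deriv g u) + deriv (f 1) u * g u
      + 2 * a * f 2 u * g u + f 1 u = 0) ∧
  (∀ u ∈ U, -(deriv (deriv g) u) + deriv (f 2) u * g u
      + 3 * a * f 3 u * g u + f 2 u * deriv g u = 0) ∧
  (∀ k : ℕ, 3 ≤ k → k ≤ n - 1 → ∀ u ∈ U,
      deriv (f k) u * g u + ((k : ℝ) + 1) * a * f (k + 1) u * g u
        + ((k : ℝ) - 1) * f k u * deriv g u + (2 - (k : ℝ)) * f k u = 0)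

/-- Conditions (C) for the triple `(a, U, F)`:  `F` is three-times differentiable on `U`,
`f n` and `F` do not vanish on `U`, `F' = |f n| ^ (1/(n-1))` on `U`, and the system
(E0)-(Ek) holds on `U` with `g = ((n−2)F)/((n−1)F')`. -/
def CondC (n : ℕ) (f : ℕ → ℝ → ℝ) (a : ℝ) (U : Set ℝ) (F : ℝ → ℝ) : Prop :=
  (∀ u ∈ U, DifferentiableAt ℝ F u) ∧
  (∀ u ∈ U, DifferentiableAt ℝ (deriv F) u) ∧
  (∀ u ∈ U, DifferentiableAt ℝ (deriv (deriv F)) u) ∧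
  (∀ u ∈ U, f n u ≠ 0) ∧
  (∀ u ∈ U, F u ≠ 0) ∧
  (∀ u ∈ U, deriv F u = |f n u| ^ ((1 : ℝ) / ((n : ℝ) - 1))) ∧
  Esys n f a U (gFun n F)

/-- The reduced system (S) on `ℝ × U` for `ξ : ℝ → ℝ` and `η : ℝ → ℝ → ℝ`. -/
def SysS (n : ℕ) (f : ℕ → ℝ → ℝ) (ξ : ℝ → ℝ) (η : ℝ → ℝ → ℝ) (U : Set ℝ) : Prop :=
  (∀ t : ℝ, ∀ u ∈ U, -(pt (pt η) t u) + deriv (f 0) u * η t u + f 1 u * pt η t u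
      - f 0 u * pu η t u + 2 * f 0 u * deriv ξ t = 0) ∧
  (∀ t : ℝ, ∀ u ∈ U, deriv (deriv ξ) t - 2 * pu (pt η) t u + deriv (f 1) u * η t u
      + 2 * f 2 u * pt η t u + f 1 u * deriv ξ t = 0) ∧
  (∀ t : ℝ, ∀ u ∈ U, -(pu (pu η) t u) + deriv (f 2) u * η t u + 3 * f 3 u * pt η t u
      + f 2 u * pu η t u = 0) ∧
  (∀ k : ℕ, 3 ≤ k → k ≤ n - 1 → ∀ t : ℝ, ∀ u ∈ U,
      deriv (f k) u * η t u + ((k : ℝ) + 1) * f (k + 1) u * pt η t u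
        + ((k : ℝ) - 1) * f k u * pu η t u + (2 - (k : ℝ)) * f k u * deriv ξ t = 0) ∧
  (∀ t : ℝ, ∀ u ∈ U, deriv (f n) u * η t u + ((n : ℝ) - 1) * f n u * pu η t u
      + (2 - (n : ℝ)) * f n u * deriv ξ t = 0)


open Polynomial in
lemma extract7 (n : ℕ) (hn : 4 ≤ n) (B0 B1 B2 B3 Bn Bn1 : ℝ) (S : ℕ → ℝ)
    (h : ∀ v : ℝ, B0 + B1 * v + B2 * v ^ 2 + B3 * v ^ 3
      + (∑ k ∈ Finset.Icc 4 (n - 1), S k * v ^ k) + Bn * v ^ n + Bn1 * v ^ (n + 1) = 0) :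
    B0 = 0 ∧ B1 = 0 ∧ B2 = 0 ∧ B3 = 0 ∧ (∀ k, 4 ≤ k → k ≤ n - 1 → S k = 0)
      ∧ Bn = 0 ∧ Bn1 = 0 := by
  set q : ℝ[X] := C B0 + C B1 * X ^ 1 + C B2 * X ^ 2 + C B3 * X ^ 3
    + (∑ k ∈ Finset.Icc 4 (n - 1), C (S k) * X ^ k) + C Bn * X ^ n + C Bn1 * X ^ (n + 1)
    with hqdef
  have hq : q = 0 := by
    apply Polynomial.funext
    intro v
    have := h v
    simp only [hqdef, eval_add, eval_mul, eval_pow, eval_C, eval_X, eval_zero,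
      Polynomial.eval_finset_sum]
    linarith
  have hco : ∀ j : ℕ, (if j = 0 then B0 else 0) + (if j = 1 then B1 else 0)
      + (if j = 2 then B2 else 0) + (if j = 3 then B3 else 0)
      + (if j ∈ Finset.Icc 4 (n - 1) then S j else 0)
      + (if j = n then Bn else 0) + (if j = n + 1 then Bn1 else 0) = 0 := by
    intro j
    have h2 := congrArg (fun p : ℝ[X] => p.coeff j) hq
    simp only [hqdef, coeff_add, finset_sum_coeff, coeff_C_mul, coeff_X_pow, coeff_C,
      mul_ite, mul_one, mul_zero, coeff_zero] at h2
    rw [Finset.sum_ite_eq (Finset.Icc 4 (n - 1)) j S] at h2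
    exact h2
  refine ⟨?_, ?_, ?_, ?_, ?_, ?_, ?_⟩
  · have hx : ¬(0 = n) := by omega
    have hx2 : ¬((0:ℕ) = n + 1) := by omega
    simpa [Finset.mem_Icc, hx, hx2] using hco 0
  · have hx : ¬(1 = n) := by omega
    have hx2 : ¬((1:ℕ) = n + 1) := by omega
    simpa [Finset.mem_Icc, hx, hx2, show n ≠ 0 by omega] using hco 1
  · have hx : ¬(2 = n) := by omega
    have hx2 : ¬((2:ℕ) = n + 1) := by omega
    simpa [Finset.mem_Icc, hx, hx2] using hco 2
  · have hx : ¬(3 = n) := by omega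
    have hx2 : ¬((3:ℕ) = n + 1) := by omega
    simpa [Finset.mem_Icc, hx, hx2] using hco 3
  · intro k hk4 hkn
    have h0 : ¬(k = 0) := by omega
    have h1 : ¬(k = 1) := by omega
    have h2 : ¬(k = 2) := by omega
    have h3 : ¬(k = 3) := by omega
    have hm : k ∈ Finset.Icc 4 (n - 1) := Finset.mem_Icc.mpr ⟨hk4, hkn⟩
    have h4 : ¬(k = n) := by omega
    have h5 : ¬(k = n + 1) := by omega
    simpa [h0, h1, h2, h3, hm, h4, h5] using hco k
  · have h0 : ¬(n = 0) := by omega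
    have h1 : ¬(n = 1) := by omega
    have h2 : ¬(n = 2) := by omega
    have h3 : ¬(n = 3) := by omega
    have hm : n ∉ Finset.Icc 4 (n - 1) := by simp [Finset.mem_Icc]; omega
    simpa [h0, h1, h2, h3, hm] using hco n
  · have h0 : ¬(n + 1 = 0) := by omega
    have h1 : ¬(n + 1 = 1) := by omega
    have h2 : ¬(n + 1 = 2) := by omega
    have h3 : ¬(n + 1 = 3) := by omega
    have hm : n + 1 ∉ Finset.Icc 4 (n - 1) := by simp [Finset.mem_Icc]
    have h4 : ¬(n + 1 = n) := by omega
    simpa [h0, h1, h2, h3, hm, h4, show n ≠ 0 by omega] using hco (n + 1)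

lemma derivFacts (ξ : ℝ → ℝ → ℝ) (ξt : ℝ → ℝ) (U : Set ℝ) (hU : IsOpen U)
    (hpu0 : ∀ t : ℝ, ∀ u ∈ U, pu ξ t u = 0)
    (hconst : ∀ t : ℝ, ∀ u ∈ U, ξ t u = ξt t) :
    (∀ t : ℝ, ∀ u ∈ U, pt ξ t u = deriv ξt t) ∧
    (∀ t : ℝ, ∀ u ∈ U, pt (pt ξ) t u = deriv (deriv ξt) t) ∧
    (∀ t : ℝ, ∀ u ∈ U, pu (pt ξ) t u = 0) ∧
    (∀ t : ℝ, ∀ u ∈ U, pu (pu ξ) t u = 0) := by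
  have hpt : ∀ t : ℝ, ∀ u ∈ U, pt ξ t u = deriv ξt t := by
    intro t u hu
    have hfe : (fun s => ξ s u) = ξt := funext fun s => hconst s u hu
    show deriv (fun s => ξ s u) t = deriv ξt t
    rw [hfe]
  refine ⟨hpt, ?_, ?_, ?_⟩
  · intro t u hu
    have hfe : (fun s => pt ξ s u) = deriv ξt := funext fun s => hpt s u hu
    show deriv (fun s => pt ξ s u) t = deriv (deriv ξt) t
    rw [hfe]
  · intro t u hu
    have hev : (fun x => pt ξ t x) =ᶠ[nhds u] fun _ => deriv ξt t := by
      filter_upwards [hU.mem_nhds hu] with x hx using hpt t x hx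
    show deriv (fun x => pt ξ t x) u = 0
    rw [hev.deriv_eq, deriv_const]
  · intro t u hu
    have hev : (fun x => pu ξ t x) =ᶠ[nhds u] fun _ => (0 : ℝ) := by
      filter_upwards [hU.mem_nhds hu] with x hx using hpu0 t x hx
    show deriv (fun x => pu ξ t x) u = 0
    rw [hev.deriv_eq, deriv_const]

theorem stmt5 (n : ℕ) (hn : 4 ≤ n) (I : Set ℝ) (hI : IsOpen I) (hIc : I.OrdConnected)
    (f : ℕ → ℝ → ℝ) (hf : ∀ k ≤ n, ContDiffOn ℝ 2 (f k) I) (hfz : ∀ k, n < k → f k = 0)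
    (U' : Set ℝ) (hU'I : U' ⊆ I) (hU' : IsOpen U') (hU'c : U'.OrdConnected)
    (hfn : ∀ u ∈ U', f n u ≠ 0)
    (ξ η : ℝ → ℝ → ℝ)
    (hξ : ContDiffOn ℝ 2 (Function.uncurry ξ) (Set.univ ×ˢ I))
    (hη : ContDiffOn ℝ 2 (Function.uncurry η) (Set.univ ×ˢ I)) :
    SC n f ξ η U' ↔
      ((∀ t : ℝ, ∀ u ∈ U', pu ξ t u = 0) ∧
        ∃ ξt : ℝ → ℝ, ContDiff ℝ 2 ξt ∧ (∀ t : ℝ, ∀ u ∈ U', ξ t u = ξt t) ∧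
          SysS n f ξt η U') := by
  constructor
  · -- forward direction
    intro hSC
    unfold SC symE at hSC
    have key := fun (t u : ℝ) (hu : u ∈ U') =>
      extract7 n hn _ _ _ _ _ _ _ (fun v => hSC t u hu v)
    -- ξ_u = 0
    have hpu0 : ∀ t : ℝ, ∀ u ∈ U', pu ξ t u = 0 := by
      intro t u hu
      have h7 := (key t u hu).2.2.2.2.2.2
      have hne : ((3 : ℝ) - n) ≠ 0 := by
        have : (4 : ℝ) ≤ (n : ℝ) := by exact_mod_cast hn
        intro hc; linarith [sub_eq_zero.mp hc]
      rcases mul_eq_zero.mp h7 with h | h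
      · rcases mul_eq_zero.mp h with h' | h'
        · exact absurd h' hne
        · exact absurd h' (hfn u hu)
      · exact h
    refine ⟨hpu0, ?_⟩
    rcases U'.eq_empty_or_nonempty with hUe | ⟨u0, hu0⟩
    · refine ⟨fun _ => 0, contDiff_const, ?_, ?_, ?_, ?_, ?_, ?_⟩ <;> simp [hUe]
    · set ξt : ℝ → ℝ := fun t => ξ t u0 with hξtdef
      have hcd : ContDiff ℝ 2 ξt := by
        rw [← contDiffOn_univ]
        exact hξ.comp ((contDiff_id.prodMk contDiff_const).contDiffOn)
          (fun t _ => ⟨Set.mem_univ _, hU'I hu0⟩)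
      have hdiff : ∀ t : ℝ, DifferentiableOn ℝ (fun x => ξ t x) U' := by
        intro t
        have h1 : ContDiffOn ℝ 2 (fun x => ξ t x) I :=
          hξ.comp ((contDiff_const.prodMk contDiff_id).contDiffOn)
            (fun x hx => ⟨Set.mem_univ _, hx⟩)
        exact (h1.differentiableOn (by norm_num)).mono hU'I
      have hconst : ∀ t : ℝ, ∀ u ∈ U', ξ t u = ξt t := by
        intro t u hu
        have hcv : Convex ℝ U' := hU'c.convex
        refine hcv.is_const_of_fderivWithin_eq_zero (hdiff t) ?_ hu hu0
        intro x hx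
        rw [fderivWithin_of_isOpen hU' hx]
        ext y
        have h0 : deriv (fun y => ξ t y) x = 0 := hpu0 t x hx
        simp [fderiv_eq_smul_deriv, h0]
      obtain ⟨hpt, hptt, hput, hpuu⟩ := derivFacts ξ ξt U' hU' hpu0 hconst
      refine ⟨ξt, hcd, hconst, ?_, ?_, ?_, ?_, ?_⟩
      · intro t u hu
        have e := (key t u hu).1
        rw [hpt t u hu] at e
        exact e
      · intro t u hu
        have e := (key t u hu).2.1
        rw [hptt t u hu, hpt t u hu, hpu0 t u hu] at e
        linarith
      · intro t u hu
        have e := (key t u hu).2.2.1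
        rw [hput t u hu, hpu0 t u hu] at e
        linarith
      · intro k hk3 hkn t u hu
        rcases eq_or_lt_of_le hk3 with h3 | h4
        · subst h3
          have e := (key t u hu).2.2.2.1
          rw [hpuu t u hu, hpt t u hu, hpu0 t u hu] at e
          norm_num at e ⊢
          linarith
        · have e := (key t u hu).2.2.2.2.1 k h4 hkn
          rw [hpt t u hu, hpu0 t u hu] at e
          linarith
      · intro t u hu
        have e := (key t u hu).2.2.2.2.2.1
        rw [hpt t u hu, hpu0 t u hu] at e
        linarith
  · -- converse direction
    rintro ⟨hpu0, ξt, hξt2, hconst, hS0, hS1, hS2, hSk, hSn⟩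
    obtain ⟨hpt, hptt, hput, hpuu⟩ := derivFacts ξ ξt U' hU' hpu0 hconst
    intro t u hu v
    have T0 : (-(pt (pt η) t u) + deriv (f 0) u * η t u + f 1 u * pt η t u - f 0 u * pu η t u
        + 2 * f 0 u * pt ξ t u) = 0 := by
      rw [hpt t u hu]; exact hS0 t u hu
    have T1 : (pt (pt ξ) t u - 2 * pu (pt η) t u + deriv (f 1) u * η t u + 2 * f 2 u * pt η t u
        + f 1 u * pt ξ t u + 3 * f 0 u * pu ξ t u) = 0 := by
      rw [hptt t u hu, hpt t u hu, hpu0 t u hu]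
      have := hS1 t u hu; linarith
    have T2 : (2 * pu (pt ξ) t u - pu (pu η) t u + deriv (f 2) u * η t u + 3 * f 3 u * pt η t u
        + f 2 u * pu η t u + 2 * f 1 u * pu ξ t u) = 0 := by
      rw [hput t u hu, hpu0 t u hu]
      have := hS2 t u hu; linarith
    have T3 : (pu (pu ξ) t u + deriv (f 3) u * η t u + 4 * f 4 u * pt η t u + 2 * f 3 u * pu η t u
        - f 3 u * pt ξ t u + f 2 u * pu ξ t u) = 0 := by
      rw [hpuu t u hu, hpt t u hu, hpu0 t u hu]
      have := hSk 3 le_rfl (by omega) t u hu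
      norm_num at this ⊢
      linarith
    have Tsum : (∑ k ∈ Finset.Icc 4 (n - 1),
        (deriv (f k) u * η t u + ((k : ℝ) + 1) * f (k + 1) u * pt η t u
          + ((k : ℝ) - 1) * f k u * pu η t u + (2 - (k : ℝ)) * f k u * pt ξ t u
          + (4 - (k : ℝ)) * f (k - 1) u * pu ξ t u) * v ^ k) = 0 := by
      refine Finset.sum_eq_zero fun k hk => ?_
      obtain ⟨hk4, hkn⟩ := Finset.mem_Icc.mp hk
      have e := hSk k (by omega) hkn t u hu
      rw [hpt t u hu, hpu0 t u hu, mul_zero, add_zero, e, zero_mul]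
    have Tn : (deriv (f n) u * η t u + ((n : ℝ) - 1) * f n u * pu η t u
        + (2 - (n : ℝ)) * f n u * pt ξ t u + (4 - (n : ℝ)) * f (n - 1) u * pu ξ t u) = 0 := by
      rw [hpt t u hu, hpu0 t u hu]
      have := hSn t u hu; linarith
    unfold symE
    rw [T0, T1, T2, T3, Tsum, Tn, hpu0 t u hu]
    ring
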